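/- Assume C has enough C-injectives and is contravariantly finite in mod Λ. Then F(C) is contravariantly finite in the epimorphism category F(mod Λ) of all surjective morphisms between finite-dimensional Λ-modules: every surjective Λ-linear map between finite-dimensional Λ-modules admits a right F(C)-approximation in the arrow category of mod Λ. -/

import Mathlib

open CategoryTheory CategoryTheory.Limits

universe u

section Defs
variable {Λ : Type u} [Ring Λ]

/-- A short exact sequence `0 → X → Y → Z → 0` of Λ-modules. -/
def ShortExactSeq {X Y Z : ModuleCat.{u} Λ} (f : X ⟶ Y) (g : Y ⟶ Z) : Prop :=
  Function.Injective f ∧ Function.Surjective g ∧ Function.Exact f g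

variable (C : Set (ModuleCat.{u} Λ))

/-- An inflation of the exact category `C`: an injective map between objects of `C`
whose cokernel lies in `C`. -/
def IsInflation {X Y : ModuleCat.{u} Λ} (f : X ⟶ Y) : Prop :=
  X ∈ C ∧ Y ∈ C ∧ Function.Injective f ∧ ∃ Z ∈ C, ∃ g : Y ⟶ Z, ShortExactSeq f g

/-- A deflation of the exact category `C`: a surjective map between objects of `C`
whose kernel lies in `C`. -/
def IsDeflation {X Y : ModuleCat.{u} Λ} (f : X ⟶ Y) : Prop :=
  X ∈ C ∧ Y ∈ C ∧ Function.Surjective f ∧ ∃ Z ∈ C, ∃ g : Z ⟶ X, ShortExactSeq g f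

/-- The monomorphism category `S(C)`, as a subcategory of the arrow category. -/
def SMono : Set (Arrow (ModuleCat.{u} Λ)) := {a | IsInflation C a.hom}

/-- The epimorphism category `F(C)`, as a subcategory of the arrow category. -/
def FEpi : Set (Arrow (ModuleCat.{u} Λ)) := {a | IsDeflation C a.hom}

/-- `I` is a `C`-injective object. -/
def CInjective (I : ModuleCat.{u} Λ) : Prop :=
  I ∈ C ∧ ∀ (U V : ModuleCat.{u} Λ), U ∈ C → V ∈ C →
    ∀ (f : I ⟶ U) (g : U ⟶ V), ShortExactSeq f g → ∃ r : U ⟶ I, f ≫ r = 𝟙 I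

/-- `P` is a `C`-projective object. -/
def CProjective (P : ModuleCat.{u} Λ) : Prop :=
  P ∈ C ∧ ∀ (U V : ModuleCat.{u} Λ), U ∈ C → V ∈ C →
    ∀ (f : U ⟶ V) (g : V ⟶ P), ShortExactSeq f g → ∃ s : P ⟶ V, s ≫ g = 𝟙 P

/-- `C` has enough `C`-injectives. -/
def EnoughCInjectives : Prop :=
  ∀ X ∈ C, ∃ (I X' : ModuleCat.{u} Λ), CInjective C I ∧ X' ∈ C ∧
    ∃ (e : X ⟶ I) (q : I ⟶ X'), ShortExactSeq e q

/-- `C` has enough `C`-projectives. -/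
def EnoughCProjectives : Prop :=
  ∀ X ∈ C, ∃ (P X' : ModuleCat.{u} Λ), CProjective C P ∧ X' ∈ C ∧
    ∃ (q : X' ⟶ P) (p : P ⟶ X), ShortExactSeq q p

def ClosedUnderIso : Prop := ∀ (M N : ModuleCat.{u} Λ), (M ≅ N) → M ∈ C → N ∈ C
def ContainsZero : Prop := ∀ M : ModuleCat.{u} Λ, Subsingleton M → M ∈ C
def ClosedUnderSums : Prop := ∀ M N : ModuleCat.{u} Λ, M ∈ C → N ∈ C → (M ⊞ N) ∈ C
def ClosedUnderExtensions : Prop :=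
  ∀ (X Y Z : ModuleCat.{u} Λ) (f : X ⟶ Y) (g : Y ⟶ Z),
    X ∈ C → Z ∈ C → ShortExactSeq f g → Y ∈ C

end Defs

section Approx
variable {A : Type*} [Category A] (D : Set A)

/-- `g : Y ⟶ Z` is a right `D`-approximation of `Z`. -/
def IsRightApprox {Y Z : A} (g : Y ⟶ Z) : Prop :=
  Y ∈ D ∧ ∀ W ∈ D, ∀ u : W ⟶ Z, ∃ v : W ⟶ Y, v ≫ g = u

/-- `g : Z ⟶ Y` is a left `D`-approximation of `Z`. -/
def IsLeftApprox {Z Y : A} (g : Z ⟶ Y) : Prop :=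
  Y ∈ D ∧ ∀ W ∈ D, ∀ u : Z ⟶ W, ∃ v : Y ⟶ W, g ≫ v = u

end Approx

section Finiteness
variable {Λ : Type u} [Ring Λ]

/-- Contravariant finiteness of `C` in `mod Λ` (the finite-dimensional Λ-modules). -/
def ContravariantlyFinite (C : Set (ModuleCat.{u} Λ)) : Prop :=
  ∀ M : ModuleCat.{u} Λ, Module.Finite Λ M →
    ∃ (Y : ModuleCat.{u} Λ) (g : Y ⟶ M), IsRightApprox C g

/-- Covariant finiteness of `C` in `mod Λ`. -/
def CovariantlyFinite (C : Set (ModuleCat.{u} Λ)) : Prop :=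
  ∀ M : ModuleCat.{u} Λ, Module.Finite Λ M →
    ∃ (Y : ModuleCat.{u} Λ) (g : M ⟶ Y), IsLeftApprox C g

end Finiteness


section MyAux
variable {Λ : Type u} [Ring Λ]

/-- Descend a linear map along a surjection whose kernel it kills. -/
noncomputable def myDescend {U V B : ModuleCat.{u} Λ} (a : U ⟶ V) (ha : Function.Surjective a)
    (h : U ⟶ B) (hker : ∀ x : U, a x = 0 → h x = 0) : V ⟶ B :=
  have key : ∀ x y : U, a x = a y → h x = h y := fun x y hxy => by
    have h0 : h (x - y) = 0 := hker _ (by rw [map_sub, hxy, sub_self])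
    rw [map_sub, sub_eq_zero] at h0; exact h0
  ModuleCat.ofHom
  { toFun := fun v => h (Function.surjInv ha v)
    map_add' := fun v w => by
      show h (Function.surjInv ha (v + w)) = h (Function.surjInv ha v) + h (Function.surjInv ha w)
      rw [key (Function.surjInv ha (v + w))
        (Function.surjInv ha v + Function.surjInv ha w)
        (by rw [map_add, Function.surjInv_eq ha, Function.surjInv_eq ha, Function.surjInv_eq ha]),
        map_add]
    map_smul' := fun r v => by
      show h (Function.surjInv ha (r • v)) = r • h (Function.surjInv ha v)
      rw [key (Function.surjInv ha (r • v)) (r • Function.surjInv ha v)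
        (by rw [map_smul, Function.surjInv_eq ha, Function.surjInv_eq ha]), map_smul] }

lemma myDescend_fac {U V B : ModuleCat.{u} Λ} (a : U ⟶ V) (ha : Function.Surjective a)
    (h : U ⟶ B) (hker : ∀ x : U, a x = 0 → h x = 0) :
    a ≫ myDescend a ha h hker = h := by
  ext x
  show h (Function.surjInv ha (a x)) = h x
  have h0 : h (Function.surjInv ha (a x) - x) = 0 :=
    hker _ (by rw [map_sub, Function.surjInv_eq ha, sub_self])
  rw [map_sub, sub_eq_zero] at h0; exact h0

/-- Extend a map to a `C`-injective along an inflation. -/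
lemma myExtend {C : Set (ModuleCat.{u} Λ)} (hCext : ClosedUnderExtensions C)
    {I L U V : ModuleCat.{u} Λ} (hI : CInjective C I) (hU : U ∈ C) (hV : V ∈ C)
    (ι : L ⟶ U) (a : U ⟶ V) (hse : ShortExactSeq ι a) (t : L ⟶ I) :
    ∃ T : U ⟶ I, ι ≫ T = t := by
  clear hU
  obtain ⟨hιinj, hasurj, hexact⟩ := hse
  set d : L ⟶ ModuleCat.of Λ (↥I × ↥U) := ModuleCat.ofHom (LinearMap.prod t.hom (-ι.hom)) with hd
  set D : Submodule Λ (↥I × ↥U) := LinearMap.range d.hom with hD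
  set W₀ : ModuleCat.{u} Λ := ModuleCat.of Λ ((↥I × ↥U) ⧸ D) with hW₀def
  set iI : I ⟶ W₀ := ModuleCat.ofHom (D.mkQ.comp (LinearMap.inl Λ ↥I ↥U)) with hiI
  set iU : U ⟶ W₀ := ModuleCat.ofHom (D.mkQ.comp (LinearMap.inr Λ ↥I ↥U)) with hiU
  have hcond : D ≤ LinearMap.ker (a.hom.comp (LinearMap.snd Λ ↥I ↥U)) := by
    rintro x ⟨l, rfl⟩
    show a (-(ι l)) = 0
    rw [map_neg, hexact.apply_apply_eq_zero l, neg_zero]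
  set p : W₀ ⟶ V := ModuleCat.ofHom (D.liftQ _ hcond) with hp
  have hiIinj : Function.Injective iI := by
    intro x y hxy
    rw [← sub_eq_zero]
    have : iI (x - y) = 0 := by rw [map_sub, hxy, sub_self]
    have hmem : ((x - y, 0) : ↥I × ↥U) ∈ D := (Submodule.Quotient.mk_eq_zero D).1 this
    obtain ⟨l, hl⟩ := hmem
    have h1 : t l = x - y := congrArg Prod.fst hl
    have h2 : -(ι l) = (0 : ↥U) := congrArg Prod.snd hl
    have hl0 : l = 0 := hιinj (by rw [map_zero]; exact neg_eq_zero.1 h2)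
    have h3 : x - y = t 0 := by rw [← hl0]; exact h1.symm
    rw [h3]
    exact map_zero t.hom
  have hpsurj : Function.Surjective p := by
    intro v
    obtain ⟨u, hu⟩ := hasurj v
    exact ⟨D.mkQ (0, u), hu⟩
  have hpexact : Function.Exact iI p := by
    intro y
    constructor
    · intro hy
      obtain ⟨⟨x, u⟩, rfl⟩ := D.mkQ_surjective y
      have hau : a u = 0 := hy
      obtain ⟨l, rfl⟩ := (hexact u).1 hau
      refine ⟨x + t l, ?_⟩
      show D.mkQ (x + t l, 0) = D.mkQ (x, ι l)
      rw [← sub_eq_zero, ← map_sub]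
      exact (Submodule.Quotient.mk_eq_zero D).2 ⟨l, by show (t l, -ι l) = _; simp [Prod.ext_iff]⟩
    · rintro ⟨x, rfl⟩
      show a 0 = 0
      rw [map_zero]
  have hW₀ : W₀ ∈ C := hCext I W₀ V iI p hI.1 hV ⟨hiIinj, hpsurj, hpexact⟩
  obtain ⟨r, hr⟩ := hI.2 W₀ V hW₀ hV iI p ⟨hiIinj, hpsurj, hpexact⟩
  refine ⟨iU ≫ r, ?_⟩
  ext l
  have hkey : iU (ι l) = iI (t l) := by
    show D.mkQ (0, ι l) = D.mkQ (t l, 0)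
    rw [← sub_eq_zero, ← map_sub]
    exact (Submodule.Quotient.mk_eq_zero D).2 ⟨-l, by show (t (-l), -ι (-l)) = _; simp [Prod.ext_iff]⟩
  show r (iU (ι l)) = t l
  rw [hkey]
  exact congrArg (fun (g : I ⟶ I) => g (t l)) hr
end MyAux

/-- If `C` has enough `C`-injectives and is contravariantly finite in `mod Λ`,
then `F(C)` is contravariantly finite in `F(mod Λ)`: every surjective map between
finite-dimensional Λ-modules admits a right `F(C)`-approximation in the arrow category. -/
theorem fepi_contravariantly_finite
    (k : Type u) [Field k] (Λ : Type u) [Ring Λ] [Algebra k Λ] [FiniteDimensional k Λ]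
    (C : Set (ModuleCat.{u} Λ))
    (hCfd : ∀ M ∈ C, Module.Finite Λ M)
    (hC0 : ContainsZero C) (hCiso : ClosedUnderIso C)
    (hCsum : ClosedUnderSums C) (hCext : ClosedUnderExtensions C)
    (hCinj : EnoughCInjectives C) (hCcontra : ContravariantlyFinite C) :
    ∀ (X Y : ModuleCat.{u} Λ), Module.Finite Λ X → Module.Finite Λ Y →
      ∀ f : X ⟶ Y, Function.Surjective f →
        ∃ (b : Arrow (ModuleCat.{u} Λ)) (g : b ⟶ Arrow.mk f), IsRightApprox (FEpi C) g := by
  intro X Y hXfin hYfin f hf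
  have hNR : IsNoetherianRing Λ := isNoetherian_of_tower k inferInstance
  obtain ⟨MX, cX, hMX, hcX⟩ := hCcontra X hXfin
  have hMXfin : Module.Finite Λ ↥MX := hCfd MX hMX
  have hMXnoeth : IsNoetherian Λ ↥MX := isNoetherian_of_isNoetherianRing_of_finite Λ ↥MX
  set Wsub : Submodule Λ ↥MX := LinearMap.ker (cX ≫ f).hom with hWsubdef
  have hWfin : Module.Finite Λ ↥Wsub := Module.Finite.iff_fg.2 (IsNoetherian.noetherian Wsub)
  obtain ⟨N, cW, hN, hcW⟩ := hCcontra (ModuleCat.of Λ ↥Wsub) hWfin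
  obtain ⟨I, N', hI, hN', e, q, heinj, hqsurj, heq⟩ := hCinj N hN
  set θ : N ⟶ MX := ModuleCat.ofHom (Wsub.subtype.comp cW.hom) with hθ
  set B0 : ModuleCat.{u} Λ := ModuleCat.of Λ (↥MX × ↥I) with hB0def
  let jmap : N ⟶ B0 := ModuleCat.ofHom (LinearMap.prod θ.hom e.hom)
  set D : Submodule Λ ↥B0 := LinearMap.range jmap.hom with hDdef
  set B1 : ModuleCat.{u} Λ := ModuleCat.of Λ (↥B0 ⧸ D) with hB1def
  set β : B0 ⟶ B1 := ModuleCat.ofHom D.mkQ with hβdef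
  have hβsurj : Function.Surjective β := D.mkQ_surjective
  have hjinj : Function.Injective jmap := by
    intro n m hnm
    have h2 : e n = e m := congrArg Prod.snd hnm
    exact heinj h2
  have hjβ : Function.Exact jmap β := by
    intro y
    constructor
    · intro hy
      obtain ⟨n, hn⟩ := (Submodule.Quotient.mk_eq_zero D).1 hy
      exact ⟨n, hn⟩
    · rintro ⟨n, rfl⟩
      exact (Submodule.Quotient.mk_eq_zero D).2 ⟨n, rfl⟩
  have hB0 : B0 ∈ C := hCiso _ _ (ModuleCat.biprodIsoProd MX I) (hCsum MX I hMX hI.1)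
  set ι₁ : MX ⟶ B1 := ModuleCat.ofHom (D.mkQ.comp (LinearMap.inl Λ ↥MX ↥I)) with hι₁def
  have hcond : D ≤ LinearMap.ker (q.hom.comp (LinearMap.snd Λ ↥MX ↥I)) := by
    rintro x ⟨n, rfl⟩
    show q (e n) = 0
    exact heq.apply_apply_eq_zero n
  set π : B1 ⟶ N' := ModuleCat.ofHom (D.liftQ _ hcond) with hπdef
  have hι₁inj : Function.Injective ι₁ := by
    intro x y hxy
    rw [← sub_eq_zero]
    have h0 : ι₁ (x - y) = 0 := by rw [map_sub, hxy, sub_self]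
    have hm : ((x - y, 0) : ↥MX × ↥I) ∈ D := (Submodule.Quotient.mk_eq_zero D).1 h0
    obtain ⟨n, hn⟩ := hm
    have h2 : e n = (0 : ↥I) := congrArg Prod.snd hn
    have hn0 : n = 0 := heinj (by rw [map_zero]; exact h2)
    have h3 : x - y = θ 0 := by rw [← hn0]; exact (congrArg Prod.fst hn).symm
    rw [h3]
    exact map_zero θ.hom
  have hπsurj : Function.Surjective π := by
    intro n'
    obtain ⟨i, hi⟩ := hqsurj n'
    exact ⟨D.mkQ (0, i), hi⟩
  have hπexact : Function.Exact ι₁ π := by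
    intro y
    constructor
    · intro hy
      obtain ⟨⟨m, i⟩, rfl⟩ := D.mkQ_surjective y
      have hqi : q i = 0 := hy
      obtain ⟨n, rfl⟩ := (heq i).1 hqi
      refine ⟨m - θ n, ?_⟩
      show D.mkQ (m - θ n, 0) = D.mkQ (m, e n)
      rw [← sub_eq_zero, ← map_sub]
      refine (Submodule.Quotient.mk_eq_zero D).2 ⟨-n, Prod.ext_iff.2 ⟨?_, ?_⟩⟩
      · show θ (-n) = m - θ n - m
        rw [map_neg]
        abel
      · show e (-n) = 0 - e n
        rw [map_neg, zero_sub]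
    · rintro ⟨m, rfl⟩
      show q 0 = 0
      exact map_zero q.hom
  have hB1 : B1 ∈ C := hCext MX B1 N' ι₁ π hMX hN' ⟨hι₁inj, hπsurj, hπexact⟩
  set g₀ : B0 ⟶ X := ModuleCat.ofHom (cX.hom.comp (LinearMap.fst Λ ↥MX ↥I)) with hg₀def
  have hcond2 : D ≤ LinearMap.ker (f.hom.comp g₀.hom) := by
    rintro x ⟨n, rfl⟩
    show f (cX (θ n)) = 0
    exact (cW n).2
  set g₁ : B1 ⟶ Y := ModuleCat.ofHom (D.liftQ _ hcond2) with hg₁def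
  have hcomm : g₀ ≫ f = β ≫ g₁ := by ext x <;> rfl
  have hdefl : Arrow.mk β ∈ FEpi C :=
    ⟨hB0, hB1, hβsurj, N, hN, jmap, hjinj, hβsurj, hjβ⟩
  refine ⟨Arrow.mk β, Arrow.homMk (u := g₀) (v := g₁) hcomm, hdefl, ?_⟩
  rintro Wb ⟨hU, hV, hasurj, L, hL, ιL, hseL⟩ u
  obtain ⟨v, hv⟩ := hcX Wb.left hU u.left
  have hmemW : ∀ l : ↥L, v (ιL l) ∈ Wsub := by
    intro l
    have h1 : cX (v (ιL l)) = u.left (ιL l) := LinearMap.congr_fun (congrArg ModuleCat.Hom.hom hv) (ιL l)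
    have h2 : f (u.left (ιL l)) = u.right (Wb.hom (ιL l)) := LinearMap.congr_fun (congrArg ModuleCat.Hom.hom (Arrow.w u)) (ιL l)
    have h3 : Wb.hom (ιL l) = 0 := hseL.2.2.apply_apply_eq_zero l
    show f (cX (v (ιL l))) = 0
    rw [h1, h2, h3, map_zero]
  set lam0 : L ⟶ ModuleCat.of Λ ↥Wsub :=
    ModuleCat.ofHom (LinearMap.codRestrict Wsub (v.hom.comp ιL.hom) hmemW)
    with hlam0def
  obtain ⟨lam, hlam⟩ := hcW L hL lam0
  have hθlam : ∀ l : ↥L, θ (lam l) = v (ιL l) := by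
    intro l
    exact congrArg Subtype.val (LinearMap.congr_fun (congrArg ModuleCat.Hom.hom hlam) l)
  obtain ⟨T, hT⟩ := myExtend hCext hI hU hV ιL Wb.hom hseL (lam ≫ e)
  set ψ₁ : Wb.left ⟶ B0 :=
    ModuleCat.ofHom (LinearMap.prod v.hom T.hom) with hψ₁def
  have hkill : ∀ x : ↥Wb.left, Wb.hom x = 0 → (ψ₁ ≫ β) x = 0 := by
    intro x hx
    obtain ⟨l, rfl⟩ := (hseL.2.2 x).1 hx
    show D.mkQ (v (ιL l), T (ιL l)) = 0
    have h1 : T (ιL l) = e (lam l) := LinearMap.congr_fun (congrArg ModuleCat.Hom.hom hT) l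
    rw [h1]
    apply (Submodule.Quotient.mk_eq_zero D).2
    exact ⟨lam l, by show (θ (lam l), e (lam l)) = _; rw [hθlam l]⟩
  set ψ₂ : Wb.right ⟶ B1 := myDescend Wb.hom hasurj (ψ₁ ≫ β) hkill with hψ₂def
  have hψ₂ : Wb.hom ≫ ψ₂ = ψ₁ ≫ β := myDescend_fac Wb.hom hasurj (ψ₁ ≫ β) hkill
  refine ⟨Arrow.homMk (u := ψ₁) (v := ψ₂) hψ₂.symm, ?_⟩
  apply Arrow.hom_ext
  · ext x
    exact LinearMap.congr_fun (congrArg ModuleCat.Hom.hom hv) x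
  · ext y
    obtain ⟨x, rfl⟩ := hasurj y
    have e1 : ψ₂ (Wb.hom x) = β (ψ₁ x) := LinearMap.congr_fun (congrArg ModuleCat.Hom.hom hψ₂) x
    have e2 : g₁ (β (ψ₁ x)) = f (g₀ (ψ₁ x)) := (LinearMap.congr_fun (congrArg ModuleCat.Hom.hom hcomm) (ψ₁ x)).symm
    have hvx : cX (v x) = u.left x := LinearMap.congr_fun (congrArg ModuleCat.Hom.hom hv) x
    have e4 : f (u.left x) = u.right (Wb.hom x) := LinearMap.congr_fun (congrArg ModuleCat.Hom.hom (Arrow.w u)) x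
    show g₁ (ψ₂ (Wb.hom x)) = u.right (Wb.hom x)
    rw [e1, e2]
    have e5 : g₀ (ψ₁ x) = cX (v x) := rfl
    rw [e5, hvx]
    exact e4
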